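/- Let S = Sym(Sym^d V) for a complex vector space V of dimension n, graded by GL(V)-isotypic components. If λ is a hook partition (λ_2 ≤ 1) with λ_2 = 1, then the multiplicity of the Schur functor S_λ V in S is zero; if λ = (kd, 0, …, 0) for k ≥ 0 then this multiplicity equals 1. -/

import Mathlib

/-- The monomial basis of `Sym^d V` for `dim V = n`: exponent vectors of total degree `d`. -/
def VB (n d : ℕ) : Type := {m : Fin n →₀ ℕ // (m.sum fun _ e => e) = d}

/-- The linear projection sending a polynomial in `x_1,…,x_n` to the corresponding element
of `Sym(Sym^d V)` (realized as the polynomial ring on the monomial basis of `Sym^d V`),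
nonzero only on the degree-`d` homogeneous part. -/
noncomputable def toS (n d : ℕ) (p : MvPolynomial (Fin n) ℂ) : MvPolynomial (VB n d) ℂ :=
  ∑ m ∈ p.support,
    if h : (m.sum fun _ e => e) = d then
      MvPolynomial.coeff m p • MvPolynomial.X (⟨m, h⟩ : VB n d)
    else 0

/-- The action of a matrix `g ∈ GL_n` on `S = Sym(Sym^d V)`: `g` acts on degree-`d`
polynomials in `x_1,…,x_n` by the substitution `x_i ↦ ∑_j g_{ji} x_j`, and this is
transported to the polynomial ring on the monomial basis of `Sym^d V` by substitution. -/
noncomputable def glAct (n d : ℕ) (g : Matrix (Fin n) (Fin n) ℂ) :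
    MvPolynomial (VB n d) ℂ →ₐ[ℂ] MvPolynomial (VB n d) ℂ :=
  MvPolynomial.aeval fun b =>
    toS n d (MvPolynomial.aeval (fun i => ∑ j, g j i • MvPolynomial.X j)
      (MvPolynomial.monomial b.1 (1 : ℂ)))

/-- The space of highest weight vectors of weight `λ` in `S = Sym(Sym^d V)`: vectors on
which every diagonal matrix `diag(t)` acts by `∏ t_i^{λ_i}` and which are fixed by every
upper-triangular unipotent matrix.  Its dimension is the multiplicity of the Schur
functor `S_λ V` in `S`. -/
noncomputable def hwv (n d : ℕ) (lam : Fin n → ℕ) :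
    Submodule ℂ (MvPolynomial (VB n d) ℂ) :=
  (⨅ t : Fin n → ℂˣ,
    Module.End.eigenspace
      ((glAct n d (Matrix.diagonal fun i => (t i : ℂ))).toLinearMap)
      (∏ i, (t i : ℂ) ^ lam i)) ⊓
  (⨅ u : {u : Matrix (Fin n) (Fin n) ℂ //
      (∀ i, u i i = 1) ∧ ∀ i j : Fin n, j < i → u i j = 0},
    Module.End.eigenspace ((glAct n d u.1).toLinearMap) 1)

namespace Aux15
open MvPolynomial

variable {n d : ℕ}

def degF (m : Fin n →₀ ℕ) : ℕ := m.sum fun _ e => e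

lemma degF_eq (m : Fin n →₀ ℕ) : degF m = ∑ i, m i := Finsupp.sum_fintype _ _ (fun _ => rfl)

/-- weight of an exponent monomial -/
def wt (e : VB n d →₀ ℕ) (i : Fin n) : ℕ := e.sum fun b k => k * b.1 i

lemma wt_add (e f : VB n d →₀ ℕ) (i : Fin n) : wt (e + f) i = wt e i + wt f i :=
  Finsupp.sum_add_index' (by simp) (by intros; ring)

lemma wt_single (b : VB n d) (k : ℕ) (i : Fin n) :
    wt (Finsupp.single b k) i = k * b.1 i := Finsupp.sum_single_index (by simp)

lemma wt_erase_add (e : VB n d →₀ ℕ) (b : VB n d) (i : Fin n) :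
    wt (e.erase b) i + e b * b.1 i = wt e i := by
  conv_rhs => rw [← Finsupp.erase_add_single b e]
  rw [wt_add, wt_single]

lemma term_le_wt (e : VB n d →₀ ℕ) (b : VB n d) (i : Fin n) :
    e b * b.1 i ≤ wt e i := by
  rw [← wt_erase_add e b i]; omega

lemma carrier_of_wt_one (e : VB n d →₀ ℕ) (j : Fin n) (h : wt e j = 1) :
    ∃ b : VB n d, b ∈ e.support ∧ e b = 1 ∧ b.1 j = 1 ∧
      ∀ b', b' ≠ b → e b' * b'.1 j = 0 := by
  classical
  have hsum : ∑ b ∈ e.support, e b * b.1 j = 1 := h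
  have hex : ∃ b ∈ e.support, e b * b.1 j ≠ 0 := by
    by_contra hc
    push_neg at hc
    rw [Finset.sum_eq_zero hc] at hsum
    omega
  obtain ⟨b, hb, hbne⟩ := hex
  have hsplit : ∑ b' ∈ e.support.erase b, e b' * b'.1 j + e b * b.1 j = 1 := by
    rw [Finset.sum_erase_add _ _ hb]; exact hsum
  have h1 : e b * b.1 j = 1 := by omega
  have h2 : ∑ b' ∈ e.support.erase b, e b' * b'.1 j = 0 := by omega
  have he1 : e b = 1 := Nat.eq_one_of_mul_eq_one_right h1
  have hj1 : b.1 j = 1 := Nat.eq_one_of_mul_eq_one_left h1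
  refine ⟨b, hb, he1, hj1, fun b' hne => ?_⟩
  by_cases hb' : b' ∈ e.support
  · exact Finset.sum_eq_zero_iff.mp h2 b' (Finset.mem_erase.mpr ⟨hne, hb'⟩)
  · simp [Finsupp.notMem_support_iff.mp hb']

lemma toS_monomial (m : Fin n →₀ ℕ) (h : (m.sum fun _ e => e) = d) (c : ℂ) :
    toS n d (monomial m c) = c • (X (⟨m, h⟩ : VB n d) : MvPolynomial (VB n d) ℂ) := by
  classical
  rcases eq_or_ne c 0 with rfl | hc
  · simp [toS]
  · rw [toS, support_monomial, if_neg hc, Finset.sum_singleton, dif_pos h]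
    simp [coeff_monomial]
    rfl

lemma toS_add (p q : MvPolynomial (Fin n) ℂ) :
    toS n d (p + q) = toS n d p + toS n d q := by
  classical
  have key : ∀ r : MvPolynomial (Fin n) ℂ, toS n d r =
      Finsupp.sum (AddMonoidAlgebra.coeff r) (fun m c => if h : (m.sum fun _ e => e) = d then c • (X (⟨m, h⟩ : VB n d) : MvPolynomial (VB n d) ℂ) else 0) := by
    intro r
    rw [toS, Finsupp.sum]
    apply Finset.sum_congr rfl
    intro m _
    rfl
  rw [key, key, key]
  exact Finsupp.sum_add_index' (by intro a; split <;> simp) 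
    (by intro a b1 b2; split <;> simp [add_smul])

lemma glAct_X (g : Matrix (Fin n) (Fin n) ℂ) (b : VB n d) :
    glAct n d g (X b) =
      toS n d (aeval (fun i => ∑ j, g j i • X j) (monomial b.1 (1 : ℂ))) :=
  aeval_X _ b

lemma glAct_diag_X (t : Fin n → ℂ) (b : VB n d) :
    glAct n d (Matrix.diagonal t) (X b) = (∏ i, t i ^ b.1 i) • X b := by
  classical
  rw [glAct_X]
  have h1 : (fun i => ∑ j, Matrix.diagonal t j i • X j : Fin n → MvPolynomial (Fin n) ℂ)
      = fun i => C (t i) * X i := by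
    funext i
    rw [Finset.sum_eq_single i]
    · rw [Matrix.diagonal_apply_eq, smul_eq_C_mul]
    · intro j _ hj; rw [Matrix.diagonal_apply_ne _ hj, zero_smul]
    · intro hi; exact absurd (Finset.mem_univ i) hi
  rw [h1, aeval_monomial]
  have h2 : (b.1.prod fun i k => (C (t i) * X i) ^ k) =
      C (∏ i, t i ^ b.1 i) * monomial b.1 1 := by
    have step : (b.1.prod fun i k => (C (t i) * X i) ^ k) =
        b.1.prod fun i k => (C (t i ^ k) : MvPolynomial (Fin n) ℂ) * X i ^ k :=
      Finsupp.prod_congr (fun i _ => by rw [mul_pow, C_pow])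
    rw [step, Finsupp.prod_mul]
    congr 1
    · rw [← map_finsuppProd (C : ℂ →+* MvPolynomial (Fin n) ℂ) b.1 (fun i k => t i ^ k),
        Finsupp.prod_fintype _ _ (fun _ => pow_zero _)]
    · rw [monomial_eq, map_one, one_mul]
  rw [h2, ← mul_assoc]
  rw [show (algebraMap ℂ (MvPolynomial (Fin n) ℂ)) 1 * C (∏ i, t i ^ b.1 i) =
    C (∏ i, t i ^ b.1 i) by rw [map_one, one_mul]]
  rw [C_mul_monomial, mul_one, toS_monomial _ b.2]
  rfl


lemma degF_add (a b : Fin n →₀ ℕ) : degF (a + b) = degF a + degF b :=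
  Finsupp.sum_add_index' (fun _ => rfl) (fun _ _ _ => rfl)

lemma degF_single (i : Fin n) (k : ℕ) : degF (Finsupp.single i k) = k :=
  Finsupp.sum_single_index rfl

lemma degF_erase_add (m : Fin n →₀ ℕ) (j : Fin n) : degF (m.erase j) + m j = degF m := by
  conv_rhs => rw [← Finsupp.erase_add_single j m]
  rw [degF_add, degF_single]

/-- the elementary transvection `1 + E_{ij}` -/
def trv (i j : Fin n) : Matrix (Fin n) (Fin n) ℂ :=
  fun a b => (if a = b then 1 else 0) + (if a = i ∧ b = j then 1 else 0)

lemma trv_diag {i j : Fin n} (hij : i ≠ j) (a : Fin n) : trv i j a a = 1 := by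
  have h2 : ¬(a = i ∧ a = j) := by rintro ⟨rfl, rfl⟩; exact hij rfl
  simp [trv, h2]

lemma trv_lower {i j : Fin n} (hij : i < j) (a b : Fin n) (h : b < a) : trv i j a b = 0 := by
  have h1 : ¬(a = b) := by rintro rfl; exact lt_irrefl _ h
  have h2 : ¬(a = i ∧ b = j) := by rintro ⟨rfl, rfl⟩; exact absurd (h.trans hij) (lt_irrefl _)
  simp [trv, h1, h2]

lemma trv_col (i j : Fin n) (c : Fin n) :
    (∑ a, trv i j a c • X a : MvPolynomial (Fin n) ℂ)
      = X c + if c = j then X i else 0 := by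
  classical
  simp only [trv, add_smul, ite_smul, one_smul, zero_smul, Finset.sum_add_distrib]
  congr 1
  · rw [Finset.sum_ite_eq' Finset.univ c X, if_pos (Finset.mem_univ c)]
  · by_cases hc : c = j
    · subst hc
      rw [if_pos rfl]
      have hc2 : ∀ a ∈ Finset.univ, (if a = i ∧ c = c then X a else (0 : MvPolynomial (Fin n) ℂ))
          = if a = i then X a else 0 := fun a _ => by simp
      rw [Finset.sum_congr rfl hc2, Finset.sum_ite_eq' Finset.univ i X,
        if_pos (Finset.mem_univ i)]
    · rw [if_neg hc]
      apply Finset.sum_eq_zero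
      intro a _
      rw [if_neg]; rintro ⟨rfl, rfl⟩; exact hc rfl

/-- the `j → i` shifted basis vector -/
noncomputable def shiftB (i j : Fin n) (b : VB n d) : VB n d :=
  if h : b.1 j = 1 ∧ i ≠ j then
    ⟨b.1.erase j + Finsupp.single i 1, by
      have h1 := degF_erase_add b.1 j
      have h2 := degF_add (b.1.erase j) (Finsupp.single i 1)
      have h3 := degF_single i 1
      have hb : degF b.1 = d := b.2
      show degF _ = d
      omega⟩
  else b

lemma shiftB_val {i j : Fin n} (b : VB n d) (h1 : b.1 j = 1) (h2 : i ≠ j) :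
    (shiftB i j b).1 = b.1.erase j + Finsupp.single i 1 := by
  rw [shiftB]
  erw [dif_pos ⟨h1, h2⟩]


lemma glAct_trv_X_zero {i j : Fin n} (hij : i ≠ j) (b : VB n d) (h : b.1 j = 0) :
    glAct n d (trv i j) (X b) = X b := by
  classical
  rw [glAct_X]
  have hs : (fun c => ∑ a, trv i j a c • X a : Fin n → MvPolynomial (Fin n) ℂ)
      = fun c => X c + if c = j then X i else 0 := funext (trv_col i j)
  rw [hs, aeval_monomial]
  have hprod : (b.1.prod fun c k => ((X c : MvPolynomial (Fin n) ℂ) + if c = j then X i else 0) ^ k)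
      = b.1.prod fun c k => X c ^ k := by
    apply Finsupp.prod_congr
    intro c hc
    have hcj : c ≠ j := by
      rintro rfl
      exact (Finsupp.mem_support_iff.mp hc) h
    rw [if_neg hcj, add_zero]
  have hm : (b.1.prod fun c k => (X c : MvPolynomial (Fin n) ℂ) ^ k) = monomial b.1 1 := by
    rw [monomial_eq, map_one, one_mul]
  rw [hprod, hm, map_one, one_mul, toS_monomial _ b.2, one_smul]
  rfl

lemma glAct_trv_X_one {i j : Fin n} (hij : i ≠ j) (b : VB n d) (h : b.1 j = 1) :
    glAct n d (trv i j) (X b) = X b + X (shiftB i j b) := by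
  classical
  rw [glAct_X]
  have hs : (fun c => ∑ a, trv i j a c • X a : Fin n → MvPolynomial (Fin n) ℂ)
      = fun c => X c + if c = j then X i else 0 := funext (trv_col i j)
  rw [hs, aeval_monomial]
  have hjsup : j ∈ b.1.support := Finsupp.mem_support_iff.mpr (by rw [h]; exact one_ne_zero)
  rw [← Finsupp.mul_prod_erase b.1 j _ hjsup]
  have hprod : ((b.1.erase j).prod fun c k => ((X c : MvPolynomial (Fin n) ℂ) + if c = j then X i else 0) ^ k)
      = monomial (b.1.erase j) (1 : ℂ) := by
    rw [monomial_eq, map_one, one_mul]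
    apply Finsupp.prod_congr
    intro c hc
    have hcj : c ≠ j := by rintro rfl; exact (Finsupp.mem_support_iff.mp hc) Finsupp.erase_same
    rw [if_neg hcj, add_zero]
  rw [hprod, h, pow_one, if_pos rfl, add_mul]
  have e1 : (X j : MvPolynomial (Fin n) ℂ) * monomial (b.1.erase j) 1 = monomial b.1 1 := by
    rw [X, monomial_mul, one_mul]
    have heq : Finsupp.erase j b.1 + Finsupp.single j 1 = b.1 := by
      conv_lhs => rw [← h]
      exact Finsupp.erase_add_single j b.1
    rw [add_comm, heq]
  have e2 : (X i : MvPolynomial (Fin n) ℂ) * monomial (b.1.erase j) 1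
      = monomial (b.1.erase j + Finsupp.single i 1) 1 := by
    rw [X, monomial_mul, one_mul, add_comm]
  have hdeg : degF (b.1.erase j + Finsupp.single i 1) = d := by
    have h1 := degF_erase_add b.1 j
    have h2 := degF_add (b.1.erase j) (Finsupp.single i 1)
    have h3 := degF_single i 1
    have hb : degF b.1 = d := b.2
    omega
  rw [e1, e2, map_one, one_mul, toS_add, toS_monomial _ b.2, toS_monomial _ hdeg,
    one_smul, one_smul]
  congr 1
  congr 1
  exact Subtype.ext (shiftB_val b h hij).symm


lemma glAct_trv_monomial {i j : Fin n} (hij : i ≠ j) (e : VB n d →₀ ℕ) (c : ℂ) (b : VB n d)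
    (hb : e b = 1) (hbj : b.1 j = 1) (hothers : ∀ b', b' ≠ b → e b' * b'.1 j = 0) :
    glAct n d (trv i j) (monomial e c)
      = monomial e c + monomial (e.erase b + Finsupp.single (shiftB i j b) 1) c := by
  classical
  have hbsup : b ∈ e.support := Finsupp.mem_support_iff.mpr (by rw [hb]; exact one_ne_zero)
  rw [monomial_eq, map_mul]
  have hC : glAct n d (trv i j) (C c) = C c := by
    rw [← algebraMap_eq]; exact (glAct n d (trv i j)).commutes c
  rw [hC, map_finsuppProd]
  have hpow : (e.prod fun b' k => glAct n d (trv i j) (X b' ^ k))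
      = e.prod fun b' k => (glAct n d (trv i j) (X b')) ^ k :=
    Finsupp.prod_congr (fun b' _ => map_pow _ _ _)
  rw [hpow, ← Finsupp.mul_prod_erase e b _ hbsup, hb, pow_one, glAct_trv_X_one hij b hbj]
  have htail : ((e.erase b).prod fun b' k => (glAct n d (trv i j) (X b')) ^ k)
      = monomial (e.erase b) (1 : ℂ) := by
    rw [monomial_eq, map_one, one_mul]
    apply Finsupp.prod_congr
    intro b' hb'
    have hne : b' ≠ b := by
      rintro rfl; exact (Finsupp.mem_support_iff.mp hb') Finsupp.erase_same
    have hz : e b' * b'.1 j = 0 := hothers b' hne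
    have hb'0 : e b' ≠ 0 := by
      intro hz0
      apply Finsupp.mem_support_iff.mp hb'
      rw [Finsupp.erase_apply, if_neg hne]; exact hz0
    have hj0 : b'.1 j = 0 := by
      rcases Nat.mul_eq_zero.mp hz with h | h
      · exact absurd h hb'0
      · exact h
    rw [glAct_trv_X_zero hij b' hj0]
  rw [htail, add_mul]
  have e1 : (X b : MvPolynomial (VB n d) ℂ) * monomial (e.erase b) 1 = monomial e 1 := by
    rw [X, monomial_mul, one_mul]
    have heq : Finsupp.erase b e + Finsupp.single b 1 = e := by
      conv_lhs => rw [← hb]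
      exact Finsupp.erase_add_single b e
    rw [add_comm, heq]
  have e2 : (X (shiftB i j b) : MvPolynomial (VB n d) ℂ) * monomial (e.erase b) 1
      = monomial (e.erase b + Finsupp.single (shiftB i j b) 1) 1 := by
    rw [X, monomial_mul, one_mul, add_comm]
  rw [e1, e2, mul_add, C_mul_monomial, C_mul_monomial, mul_one, ← monomial_eq]

lemma glAct_diag_monomial (t : Fin n → ℂ) (e : VB n d →₀ ℕ) (c : ℂ) :
    glAct n d (Matrix.diagonal t) (monomial e c)
      = (∏ i, t i ^ wt e i) • monomial e c := by
  classical
  rw [monomial_eq, map_mul]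
  have hC : glAct n d (Matrix.diagonal t) (C c) = C c := by
    rw [← algebraMap_eq]; exact (glAct n d (Matrix.diagonal t)).commutes c
  rw [hC, map_finsuppProd]
  have hpow : (e.prod fun b k => glAct n d (Matrix.diagonal t) (X b ^ k))
      = e.prod fun b k => (C ((∏ i, t i ^ b.1 i) ^ k) : MvPolynomial (VB n d) ℂ) * X b ^ k := by
    apply Finsupp.prod_congr
    intro b _
    rw [map_pow, glAct_diag_X, smul_pow, smul_eq_C_mul]
  rw [hpow, Finsupp.prod_mul]
  have hscal : (e.prod fun b k => (C ((∏ i, t i ^ b.1 i) ^ k) : MvPolynomial (VB n d) ℂ))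
      = C (∏ i, t i ^ wt e i) := by
    rw [← map_finsuppProd (C : ℂ →+* MvPolynomial (VB n d) ℂ) e (fun b k => (∏ i, t i ^ b.1 i) ^ k)]
    congr 1
    have h1 : (e.prod fun b k => (∏ i, t i ^ b.1 i) ^ k)
        = e.prod fun b k => ∏ i, t i ^ (k * b.1 i) := by
      apply Finsupp.prod_congr
      intro b _
      rw [← Finset.prod_pow]
      exact Finset.prod_congr rfl (fun i _ => by rw [← pow_mul, mul_comm])
    rw [h1, Finsupp.prod, Finset.prod_comm]
    apply Finset.prod_congr rfl
    intro i _
    rw [Finset.prod_pow_eq_pow_sum]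
    rfl
  rw [hscal]
  have hmon : (e.prod fun b k => (X b : MvPolynomial (VB n d) ℂ) ^ k) = monomial e 1 := by
    rw [monomial_eq, map_one, one_mul]
  rw [hmon, ← mul_assoc, mul_comm (C c), mul_assoc, C_mul_monomial, mul_one, ← smul_eq_C_mul]

lemma coeff_glAct_diag (t : Fin n → ℂ) (p : MvPolynomial (VB n d) ℂ) (e : VB n d →₀ ℕ) :
    coeff e (glAct n d (Matrix.diagonal t) p) = (∏ i, t i ^ wt e i) * coeff e p := by
  classical
  conv_lhs => rw [p.as_sum, map_sum]
  rw [coeff_sum]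
  rcases (em (e ∈ p.support)) with he | he
  · rw [Finset.sum_eq_single e]
    · rw [glAct_diag_monomial, coeff_smul, coeff_monomial, if_pos rfl, smul_eq_mul]
    · intro e' _ hne
      rw [glAct_diag_monomial, coeff_smul, coeff_monomial, if_neg hne, smul_zero]
    · intro h; exact absurd he h
  · rw [notMem_support_iff.mp he, mul_zero]
    apply Finset.sum_eq_zero
    intro e' he'
    rw [glAct_diag_monomial, coeff_smul, coeff_monomial, if_neg, smul_zero]
    rintro rfl; exact he he'


lemma weights_of_diag {lam : Fin n → ℕ} {p : MvPolynomial (VB n d) ℂ}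
    (hp : ∀ t : Fin n → ℂˣ,
      glAct n d (Matrix.diagonal fun i => (t i : ℂ)) p = (∏ i, (t i : ℂ) ^ lam i) • p)
    {e : VB n d →₀ ℕ} (he : e ∈ p.support) (i : Fin n) : wt e i = lam i := by
  classical
  set t : Fin n → ℂˣ := Function.update (fun _ => 1) i (Units.mk0 2 two_ne_zero) with ht
  have hcoeff := congrArg (coeff e) (hp t)
  rw [coeff_glAct_diag, coeff_smul, smul_eq_mul] at hcoeff
  have hne : coeff e p ≠ 0 := mem_support_iff.mp he
  have heq : (∏ l, ((t l : ℂ)) ^ wt e l) = ∏ l, ((t l : ℂ)) ^ lam l :=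
    mul_right_cancel₀ hne hcoeff
  have hval : ∀ (w : Fin n → ℕ), (∏ l, ((t l : ℂ)) ^ w l) = 2 ^ w i := by
    intro w
    rw [Finset.prod_eq_single i]
    · rw [ht, Function.update_self]; norm_num
    · intro l _ hl
      rw [ht, Function.update_of_ne hl]; norm_num
    · intro h; exact absurd (Finset.mem_univ i) h
  rw [hval, hval] at heq
  have : ((2 : ℕ) : ℂ) ^ wt e i = ((2 : ℕ) : ℂ) ^ lam i := by exact_mod_cast heq
  rw [← Nat.cast_pow, ← Nat.cast_pow] at this
  exact Nat.pow_right_injective (le_refl 2) (Nat.cast_injective this)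

/-- the shift of an exponent vector along the transvection `i ← j` -/
noncomputable def sh (i j : Fin n) (e : VB n d →₀ ℕ) : VB n d →₀ ℕ :=
  if h : ∃ b ∈ e.support, b.1 j ≠ 0 then
    e.erase h.choose + Finsupp.single (shiftB i j h.choose) 1
  else e

lemma sh_spec {j : Fin n} (i : Fin n) (e : VB n d →₀ ℕ) (hwt : wt e j = 1) :
    ∃ b : VB n d, e b = 1 ∧ b.1 j = 1 ∧ (∀ b', b' ≠ b → e b' * b'.1 j = 0) ∧
      sh i j e = e.erase b + Finsupp.single (shiftB i j b) 1 := by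
  classical
  obtain ⟨b0, hb0, he1, hj1, hoth⟩ := carrier_of_wt_one e j hwt
  have hex : ∃ b ∈ e.support, b.1 j ≠ 0 := ⟨b0, hb0, by rw [hj1]; exact one_ne_zero⟩
  have hch : hex.choose = b0 := by
    by_contra hne
    obtain ⟨hc1, hc2⟩ := hex.choose_spec
    have h0 := hoth hex.choose hne
    rcases Nat.mul_eq_zero.mp h0 with h | h
    · exact (Finsupp.mem_support_iff.mp hc1) h
    · exact hc2 h
  refine ⟨b0, he1, hj1, hoth, ?_⟩
  rw [sh, dif_pos hex, hch]

lemma relation {i j : Fin n} (hij : i < j) (p : MvPolynomial (VB n d) ℂ)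
    (hp : glAct n d (trv i j) p = p)
    (hwtj : ∀ e ∈ p.support, wt e j = 1) :
    ∑ e ∈ p.support, monomial (sh i j e) (coeff e p) = 0 := by
  classical
  have hne : i ≠ j := Fin.ne_of_lt hij
  have expand : glAct n d (trv i j) p
      = p + ∑ e ∈ p.support, monomial (sh i j e) (coeff e p) := by
    conv_lhs => rw [p.as_sum]
    rw [map_sum]
    have hterm : ∀ e ∈ p.support, glAct n d (trv i j) (monomial e (coeff e p))
        = monomial e (coeff e p) + monomial (sh i j e) (coeff e p) := by
      intro e he
      obtain ⟨b, h1, h2, h3, h4⟩ := sh_spec i e (hwtj e he)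
      rw [h4]
      exact glAct_trv_monomial hne e _ b h1 h2 h3
    rw [Finset.sum_congr rfl hterm, Finset.sum_add_distrib]
    congr 1
    exact p.as_sum.symm
  rw [hp] at expand
  exact (left_eq_add.mp expand)


lemma two_term_le_wt (E : VB n d →₀ ℕ) (b1 b2 : VB n d) (i : Fin n) (hne : b1 ≠ b2) :
    E b1 * b1.1 i + E b2 * b2.1 i ≤ wt E i := by
  classical
  have h1 := wt_erase_add E b1 i
  have h2 := term_le_wt (E.erase b1) b2 i
  rw [Finsupp.erase_apply, if_neg (Ne.symm hne)] at h2
  omega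

lemma claim1 {lam : Fin n → ℕ} {p : MvPolynomial (VB n d) ℂ}
    (HA : ∀ e ∈ p.support, ∀ i, wt e i = lam i)
    (HU : ∀ i j : Fin n, i < j → glAct n d (trv i j) p = p)
    {i j : Fin n} (hij : i < j) (hli : lam i = 1) (hlj : lam j = 1)
    {e : VB n d →₀ ℕ} (he : e ∈ p.support) {b : VB n d}
    (hbi : b.1 i ≠ 0) (hbj : b.1 j ≠ 0) : e b = 0 := by
  classical
  by_contra hb0
  have hije : i ≠ j := Fin.ne_of_lt hij
  have hwtj : ∀ e' ∈ p.support, wt e' j = 1 := fun e' he' => by rw [HA e' he' j, hlj]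
  have hrel := relation hij p (HU i j hij) hwtj
  obtain ⟨b1, hb1e, hb1j, hoth1, hsh1⟩ := sh_spec i e (hwtj e he)
  have hbb1 : b = b1 := by
    by_contra hne
    rcases Nat.mul_eq_zero.mp (hoth1 b hne) with h | h
    · exact hb0 h
    · exact hbj h
  subst hbb1
  have hbi1 : b.1 i = 1 := by
    have h1 := term_le_wt e b i
    rw [HA e he i, hli, hb1e, one_mul] at h1
    omega
  have hBv := shiftB_val b hb1j hije
  have hBi : (shiftB i j b).1 i = 2 := by
    rw [hBv, Finsupp.add_apply, Finsupp.erase_apply, if_neg hije, hbi1, Finsupp.single_eq_same]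
  have hwm : wt (sh i j e) i = 2 := by
    rw [hsh1, wt_add, wt_single, one_mul, hBi]
    have h2 := wt_erase_add e b i
    rw [HA e he i, hli, hb1e, one_mul, hbi1] at h2
    omega
  -- uniqueness of the preimage
  have huniq : ∀ e' ∈ p.support, e' ≠ e → sh i j e' ≠ sh i j e := by
    intro e' he' hne hshEq
    apply hne
    obtain ⟨b', hb'e, hb'j, hoth', hsh'⟩ := sh_spec i e' (hwtj e' he')
    have hB'i : (shiftB i j b').1 i = b'.1 i + 1 := by
      rw [shiftB_val b' hb'j hije, Finsupp.add_apply, Finsupp.erase_apply, if_neg hije,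
        Finsupp.single_eq_same]
    have hmB' : 1 ≤ (sh i j e) (shiftB i j b') := by
      rw [← hshEq, hsh', Finsupp.add_apply, Finsupp.single_eq_same]; omega
    have hmB : 1 ≤ (sh i j e) (shiftB i j b) := by
      rw [hsh1, Finsupp.add_apply, Finsupp.single_eq_same]; omega
    have hBB' : shiftB i j b' = shiftB i j b := by
      by_contra hne2
      have h3 := two_term_le_wt (sh i j e) (shiftB i j b) (shiftB i j b') i (Ne.symm hne2)
      rw [hBi, hB'i, hwm] at h3
      have h4 : 1 ≤ (sh i j e) (shiftB i j b') * (b'.1 i + 1) :=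
        Nat.one_le_iff_ne_zero.mpr (Nat.mul_ne_zero (by omega) (Nat.succ_ne_zero _))
      omega
    have hval : b'.1 = b.1 := by
      have h5 : b'.1.erase j + Finsupp.single i 1 = b.1.erase j + Finsupp.single i 1 := by
        rw [← shiftB_val b' hb'j hije, ← shiftB_val b hb1j hije, hBB']
      have h6 : b'.1.erase j = b.1.erase j := add_right_cancel h5
      ext l
      by_cases hl : l = j
      · rw [hl, hb'j, hb1j]
      · have h7 := congrArg (fun f => f l) h6
        simpa [Finsupp.erase_apply, hl] using h7
    have hbb : b' = b := Subtype.ext hval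
    subst hbb
    rw [hsh1, hsh'] at hshEq
    have h8 : e'.erase b' = e.erase b' := add_right_cancel hshEq
    have h9 : e' = e'.erase b' + Finsupp.single b' (1 : ℕ) := by
      conv_lhs => rw [← Finsupp.erase_add_single b' e']
      rw [hb'e]
    have h10 : e = e.erase b' + Finsupp.single b' (1 : ℕ) := by
      conv_lhs => rw [← Finsupp.erase_add_single b' e]
      rw [hb1e]
    rw [h9, h10, h8]
  have hcoeff := congrArg (coeff (sh i j e)) hrel
  rw [coeff_sum, coeff_zero] at hcoeff
  rw [Finset.sum_eq_single e] at hcoeff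
  · rw [coeff_monomial, if_pos rfl] at hcoeff
    exact (mem_support_iff.mp he) hcoeff
  · intro e' he' hne
    rw [coeff_monomial, if_neg (huniq e' he' hne)]
  · intro h; exact absurd he h


lemma conc (hn : 2 ≤ n) (b : VB n d) (h : ∀ l, l ≠ (⟨0, by omega⟩ : Fin n) → b.1 l = 0) :
    b.1 = Finsupp.single (⟨0, by omega⟩ : Fin n) d := by
  classical
  set i0 : Fin n := ⟨0, by omega⟩
  have hval : b.1 = Finsupp.single i0 (b.1 i0) := by
    ext l
    rcases eq_or_ne l i0 with rfl | hl
    · rw [Finsupp.single_eq_same]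
    · rw [h l hl, Finsupp.single_apply, if_neg (Ne.symm hl)]
  have hdeg : degF b.1 = d := b.2
  rw [hval, degF_single] at hdeg
  rw [hval, hdeg]

lemma canonical (hn : 2 ≤ n) {lam : Fin n → ℕ} {p : MvPolynomial (VB n d) ℂ}
    (hanti : Antitone lam) (h1 : lam ⟨1, Nat.lt_of_lt_of_le one_lt_two hn⟩ = 1)
    (HA : ∀ e ∈ p.support, ∀ i, wt e i = lam i)
    (HU : ∀ i j : Fin n, i < j → glAct n d (trv i j) p = p)
    {e : VB n d →₀ ℕ} (he : e ∈ p.support) {b : VB n d} (hbe : e b ≠ 0)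
    {l : Fin n} (hl : l ≠ (⟨0, by omega⟩ : Fin n)) (hbl : b.1 l ≠ 0) :
    e b = 1 ∧ b.1 = Finsupp.single (⟨0, by omega⟩ : Fin n) (d - 1) + Finsupp.single l 1 := by
  classical
  set i0 : Fin n := ⟨0, by omega⟩ with hi0
  -- lam l = 1
  have hlam : ∀ l' : Fin n, l' ≠ i0 → ∀ b' : VB n d, e b' ≠ 0 → b'.1 l' ≠ 0 → lam l' = 1 := by
    intro l' hl' b' hb' hb'l
    have hle : lam l' ≤ 1 := by
      have : (⟨1, Nat.lt_of_lt_of_le one_lt_two hn⟩ : Fin n) ≤ l' := by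
        have hv : l'.val ≠ 0 := fun hz => hl' (Fin.ext hz)
        rw [Fin.le_def]
        show 1 ≤ l'.val
        omega
      calc lam l' ≤ lam ⟨1, Nat.lt_of_lt_of_le one_lt_two hn⟩ := hanti this
        _ = 1 := h1
    have hge : 1 ≤ lam l' := by
      have h2 := term_le_wt e b' l'
      rw [HA e he l'] at h2
      have : 1 ≤ e b' * b'.1 l' := Nat.one_le_iff_ne_zero.mpr (Nat.mul_ne_zero hb' hb'l)
      omega
    omega
  have hlaml : lam l = 1 := hlam l hl b hbe hbl
  -- e b = 1 and b.1 l = 1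
  have hble : e b * b.1 l ≤ 1 := by
    have h2 := term_le_wt e b l
    rw [HA e he l, hlaml] at h2
    exact h2
  have heb1 : e b = 1 ∧ b.1 l = 1 := by
    have h3 : 1 ≤ e b := Nat.one_le_iff_ne_zero.mpr hbe
    have h4 : 1 ≤ b.1 l := Nat.one_le_iff_ne_zero.mpr hbl
    have h5 : e b ≤ e b * b.1 l := Nat.le_mul_of_pos_right _ (by omega)
    have h6 : b.1 l ≤ e b * b.1 l := Nat.le_mul_of_pos_left _ (by omega)
    omega
  -- all other coordinates vanish
  have hother : ∀ l' : Fin n, l' ≠ i0 → l' ≠ l → b.1 l' = 0 := by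
    intro l' hl'0 hl'l
    by_contra hbl'
    have hlaml' : lam l' = 1 := hlam l' hl'0 b hbe hbl'
    rcases lt_trichotomy l l' with hlt | heq | hlt
    · exact hbe (claim1 HA HU hlt hlaml hlaml' he hbl hbl')
    · exact hl'l heq.symm
    · exact hbe (claim1 HA HU hlt hlaml' hlaml he hbl' hbl)
  -- canonical form
  have hform : b.1 = Finsupp.single i0 (b.1 i0) + Finsupp.single l 1 := by
    ext l'
    rw [Finsupp.add_apply, Finsupp.single_apply, Finsupp.single_apply]
    rcases eq_or_ne l' i0 with rfl | h0
    · rw [if_pos rfl, if_neg (fun hc => hl hc), add_zero]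
    · rcases eq_or_ne l' l with rfl | hll
      · rw [if_neg (Ne.symm hl), if_pos rfl, zero_add, heb1.2]
      · rw [if_neg (Ne.symm h0), if_neg (Ne.symm hll), hother l' h0 hll, add_zero]
  have hdeg : degF b.1 = d := b.2
  rw [hform, degF_add, degF_single, degF_single] at hdeg
  have : b.1 i0 = d - 1 := by omega
  rw [this] at hform
  exact ⟨heb1.1, hform⟩


lemma support_unique (hn : 2 ≤ n) (hd : 1 ≤ d) {lam : Fin n → ℕ} {p : MvPolynomial (VB n d) ℂ}
    (hanti : Antitone lam) (h1 : lam ⟨1, Nat.lt_of_lt_of_le one_lt_two hn⟩ = 1)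
    (HA : ∀ e ∈ p.support, ∀ i, wt e i = lam i)
    (HU : ∀ i j : Fin n, i < j → glAct n d (trv i j) p = p)
    {e1 e2 : VB n d →₀ ℕ} (he1 : e1 ∈ p.support) (he2 : e2 ∈ p.support) : e1 = e2 := by
  classical
  set i0 : Fin n := ⟨0, by omega⟩ with hi0def
  -- agreement at basis vectors carrying a nonzero coordinate
  have hA : ∀ b : VB n d, (∃ l : Fin n, l ≠ i0 ∧ b.1 l ≠ 0) → e1 b = e2 b := by
    intro b ⟨l, hl, hbl⟩
    have sub : ∀ f, f ∈ p.support → ∀ g, g ∈ p.support → f b ≠ 0 → g b = 1 := by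
      intro f hf g hg hfb
      obtain ⟨hf1, hcan⟩ := canonical hn hanti h1 HA HU hf hfb hl hbl
      have hlaml : lam l = 1 := by
        have hle : lam l ≤ 1 := by
          have hv : l.val ≠ 0 := fun hz => hl (Fin.ext hz)
          have hle2 : (⟨1, Nat.lt_of_lt_of_le one_lt_two hn⟩ : Fin n) ≤ l := by
            rw [Fin.le_def]; show 1 ≤ l.val; omega
          calc lam l ≤ lam ⟨1, Nat.lt_of_lt_of_le one_lt_two hn⟩ := hanti hle2
            _ = 1 := h1
        have hge : 1 ≤ lam l := by
          have h2 := term_le_wt f b l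
          rw [HA f hf l] at h2
          have : 1 ≤ f b * b.1 l :=
            Nat.one_le_iff_ne_zero.mpr (Nat.mul_ne_zero hfb hbl)
          omega
        omega
      have hwt : wt g l = 1 := by rw [HA g hg l, hlaml]
      obtain ⟨b', hb'sup, hgb', hb'l, _⟩ := carrier_of_wt_one g l hwt
      obtain ⟨hg1, hcan'⟩ := canonical hn hanti h1 HA HU hg
        (Finsupp.mem_support_iff.mp hb'sup) hl (by rw [hb'l]; exact one_ne_zero)
      have hbb : b' = b := Subtype.ext (hcan'.trans hcan.symm)
      rw [← hbb]; exact hg1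
    rcases eq_or_ne (e1 b) 0 with hz1 | hz1
    · rcases eq_or_ne (e2 b) 0 with hz2 | hz2
      · rw [hz1, hz2]
      · have ha := sub e2 he2 e1 he1 hz2
        omega
    · rw [sub e1 he1 e1 he1 hz1, sub e1 he1 e2 he2 hz1]
  -- now the full extensionality
  ext b
  by_cases hb : ∃ l : Fin n, l ≠ i0 ∧ b.1 l ≠ 0
  · exact hA b hb
  · push_neg at hb
    have hbval : b.1 = Finsupp.single i0 d := conc hn b (fun l hl => hb l hl)
    have herase : e1.erase b = e2.erase b := by
      ext b'
      rcases eq_or_ne b' b with rfl | hne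
      · rw [Finsupp.erase_same, Finsupp.erase_same]
      · rw [Finsupp.erase_apply, if_neg hne, Finsupp.erase_apply, if_neg hne]
        apply hA
        by_contra hno
        push_neg at hno
        exact hne (Subtype.ext ((conc hn b' (fun l hl => hno l hl)).trans hbval.symm))
    have hw1 := wt_erase_add e1 b i0
    have hw2 := wt_erase_add e2 b i0
    rw [HA e1 he1 i0] at hw1
    rw [HA e2 he2 i0] at hw2
    rw [herase] at hw1
    have hbi0 : b.1 i0 = d := by rw [hbval, Finsupp.single_eq_same]
    rw [hbi0] at hw1 hw2
    have hmul : e1 b * d = e2 b * d := by omega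
    exact Nat.eq_of_mul_eq_mul_right (by omega) hmul

lemma p_eq_zero (hn : 2 ≤ n) (hd : 1 ≤ d) {lam : Fin n → ℕ} {p : MvPolynomial (VB n d) ℂ}
    (hanti : Antitone lam) (h1 : lam ⟨1, Nat.lt_of_lt_of_le one_lt_two hn⟩ = 1)
    (HA : ∀ e ∈ p.support, ∀ i, wt e i = lam i)
    (HU : ∀ i j : Fin n, i < j → glAct n d (trv i j) p = p) : p = 0 := by
  classical
  by_contra hp0
  obtain ⟨e0, he0⟩ := Finset.nonempty_iff_ne_empty.mpr
    (fun hemp => hp0 (support_eq_empty.mp hemp))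
  set i0 : Fin n := ⟨0, by omega⟩
  set j1 : Fin n := ⟨1, Nat.lt_of_lt_of_le one_lt_two hn⟩
  have hij : i0 < j1 := by rw [Fin.lt_def]; show (0:ℕ) < 1; omega
  have hwtj : ∀ e ∈ p.support, wt e j1 = 1 := fun e he => by rw [HA e he j1, h1]
  have hrel := relation hij p (HU _ _ hij) hwtj
  have hsupp : p.support = {e0} := by
    apply Finset.eq_singleton_iff_unique_mem.mpr
    exact ⟨he0, fun e he => support_unique hn hd hanti h1 HA HU he he0⟩
  rw [hsupp, Finset.sum_singleton] at hrel
  exact (mem_support_iff.mp he0) (by simpa using hrel)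

lemma hwv_HA {lam : Fin n → ℕ} {p : MvPolynomial (VB n d) ℂ} (hp : p ∈ hwv n d lam) :
    ∀ e ∈ p.support, ∀ i, wt e i = lam i := by
  intro e he i
  refine weights_of_diag (lam := lam) ?_ he i
  intro t
  have h2 := (Submodule.mem_iInf _).mp (Submodule.mem_inf.mp hp).1 t
  have h3 := Module.End.mem_eigenspace_iff.mp h2
  simpa using h3

lemma hwv_HU {lam : Fin n → ℕ} {p : MvPolynomial (VB n d) ℂ} (hp : p ∈ hwv n d lam) :
    ∀ i j : Fin n, i < j → glAct n d (trv i j) p = p := by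
  intro i j hij
  have h2 := (Submodule.mem_iInf _).mp (Submodule.mem_inf.mp hp).2
    ⟨trv i j, fun a => trv_diag (Fin.ne_of_lt hij) a, fun a b hab => trv_lower hij a b hab⟩
  have h3 := Module.End.mem_eigenspace_iff.mp h2
  rw [one_smul] at h3
  simpa using h3


lemma part1 (hn : 2 ≤ n) (hd : 1 ≤ d) (lam : Fin n → ℕ) (hanti : Antitone lam)
    (h1 : lam ⟨1, Nat.lt_of_lt_of_le one_lt_two hn⟩ = 1) : Module.finrank ℂ (hwv n d lam) = 0 := by
  have hbot : hwv n d lam = ⊥ := by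
    rw [eq_bot_iff]
    intro p hp
    rw [Submodule.mem_bot]
    exact p_eq_zero hn hd hanti h1 (hwv_HA hp) (hwv_HU hp)
  rw [hbot]
  exact finrank_bot ℂ _

lemma glAct_unip_X0 (hn : 2 ≤ n) (u : Matrix (Fin n) (Fin n) ℂ)
    (hud : ∀ i, u i i = 1) (hul : ∀ i j : Fin n, j < i → u i j = 0) :
    glAct n d u (X (⟨Finsupp.single ⟨0, by omega⟩ d, degF_single _ d⟩ : VB n d))
      = X (⟨Finsupp.single ⟨0, by omega⟩ d, degF_single _ d⟩ : VB n d) := by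
  classical
  set i0 : Fin n := ⟨0, by omega⟩ with hi0
  erw [glAct_X]
  have hcol : (∑ a, u a i0 • X a : MvPolynomial (Fin n) ℂ) = X i0 := by
    rw [Finset.sum_eq_single i0]
    · rw [hud, one_smul]
    · intro a _ ha
      have : i0 < a := by
        rw [Fin.lt_def]
        have : a.val ≠ 0 := fun hz => ha (Fin.ext hz)
        show 0 < a.val
        omega
      rw [hul a i0 this, zero_smul]
    · intro h; exact absurd (Finset.mem_univ i0) h
  rw [aeval_monomial, map_one, one_mul]
  have hval : ((⟨Finsupp.single i0 d, degF_single i0 d⟩ : VB n d) : Fin n →₀ ℕ)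
      = Finsupp.single i0 d := rfl
  rw [hval, Finsupp.prod_single_index
      (h := fun i k => ((∑ j, u j i • X j : MvPolynomial (Fin n) ℂ)) ^ k) (by exact pow_zero _),
    hcol, X_pow_eq_monomial, toS_monomial _ (degF_single i0 d), one_smul]
  rfl

lemma part2 (hn : 2 ≤ n) (hd : 1 ≤ d) (k : ℕ) :
    Module.finrank ℂ (hwv n d fun i => if (i : ℕ) = 0 then k * d else 0) = 1 := by
  classical
  set i0 : Fin n := ⟨0, by omega⟩ with hi0
  set lam : Fin n → ℕ := fun i => if (i : ℕ) = 0 then k * d else 0 with hlam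
  set b0 : VB n d := ⟨Finsupp.single i0 d, degF_single _ d⟩ with hb0
  set v : MvPolynomial (VB n d) ℂ := X b0 ^ k with hv
  have hlam_i0 : lam i0 = k * d := if_pos rfl
  have hlam_ne : ∀ l : Fin n, l ≠ i0 → lam l = 0 := by
    intro l hl
    have hlv : l.val ≠ 0 := fun hz => hl (Fin.ext hz)
    exact if_neg hlv
  have hmem : v ∈ hwv n d lam := by
    refine Submodule.mem_inf.mpr ⟨?_, ?_⟩
    · apply (Submodule.mem_iInf _).mpr
      intro t
      rw [Module.End.mem_eigenspace_iff, AlgHom.toLinearMap_apply, hv, map_pow,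
        glAct_diag_X, smul_pow]
      congr 1
      rw [← Finset.prod_pow]
      apply Finset.prod_congr rfl
      intro i _
      rw [← pow_mul]
      congr 1
      rcases eq_or_ne i i0 with rfl | hi
      · show (Finsupp.single i0 d) i0 * k = lam i0
        rw [Finsupp.single_eq_same, hlam_i0, Nat.mul_comm]
      · show (Finsupp.single i0 d) i * k = lam i
        rw [hlam_ne i hi, Finsupp.single_apply, if_neg (Ne.symm hi), Nat.zero_mul]
    · apply (Submodule.mem_iInf _).mpr
      rintro ⟨u, hud, hul⟩
      rw [Module.End.mem_eigenspace_iff, one_smul, AlgHom.toLinearMap_apply, hv, map_pow,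
        glAct_unip_X0 hn u hud hul]
      rfl
  have hvne : v ≠ 0 := pow_ne_zero _ (X_ne_zero _)
  have hupper : hwv n d lam ≤ Submodule.span ℂ {v} := by
    intro p hp
    have HA := hwv_HA hp
    have hsupp : ∀ e ∈ p.support, e = Finsupp.single b0 k := by
      intro e he
      have hcoord : ∀ b ∈ e.support, b = b0 := by
        intro b hbsup
        have hbz : ∀ l : Fin n, l ≠ i0 → b.1 l = 0 := by
          intro l hl
          have hw := HA e he l
          rw [hlam_ne l hl] at hw
          have h2 := term_le_wt e b l
          rw [hw] at h2
          have hb0' : e b ≠ 0 := Finsupp.mem_support_iff.mp hbsup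
          rcases Nat.mul_eq_zero.mp (Nat.le_zero.mp h2) with h | h
          · exact absurd h hb0'
          · exact h
        exact Subtype.ext (conc hn b hbz)
      have he' : e = Finsupp.single b0 (e b0) := by
        ext b'
        rcases eq_or_ne b' b0 with rfl | hne
        · rw [Finsupp.single_eq_same]
        · rw [Finsupp.single_apply, if_neg (Ne.symm hne)]
          by_contra h0
          exact hne (hcoord b' (Finsupp.mem_support_iff.mpr h0))
      have hk : e b0 = k := by
        have hw := HA e he i0
        rw [hlam_i0] at hw
        have hw2 : wt (Finsupp.single b0 (e b0)) i0 = k * d := by rw [← he']; exact hw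
        rw [wt_single] at hw2
        have hbi0 : b0.1 i0 = d := Finsupp.single_eq_same
        rw [hbi0] at hw2
        exact Nat.eq_of_mul_eq_mul_right (by omega) hw2
      rw [he', hk]
    have hsub : p.support ⊆ {Finsupp.single b0 k} := fun e he =>
      Finset.mem_singleton.mpr (hsupp e he)
    have hrepr : p = coeff (Finsupp.single b0 k) p • v := by
      conv_lhs => rw [p.as_sum]
      rw [Finset.sum_subset hsub (fun e _ hne => by
        rw [notMem_support_iff.mp hne]; exact monomial_zero)]
      rw [Finset.sum_singleton, hv, X_pow_eq_monomial, smul_monomial, smul_eq_mul, mul_one]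
    rw [hrepr]
    exact Submodule.smul_mem _ _ (Submodule.mem_span_singleton_self v)
  have hspan : hwv n d lam = Submodule.span ℂ {v} :=
    le_antisymm hupper (by rw [Submodule.span_le, Set.singleton_subset_iff]; exact hmem)
  rw [hspan]
  exact finrank_span_singleton hvne

end Aux15

/-- Hook multiplicities in the plethysm `S = Sym(Sym^d V)` (`dim V = n`):  if `λ` is a hook
partition with `λ_2 = 1`, then the multiplicity of `S_λ V` in `S` is zero; if
`λ = (kd, 0, …, 0)` for `k ≥ 0`, the multiplicity is `1`. -/
theorem stmt_15 (n d : ℕ) (hn : 2 ≤ n) (hd : 1 ≤ d) :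
    (∀ lam : Fin n → ℕ, Antitone lam → lam ⟨1, by omega⟩ = 1 →
      Module.finrank ℂ (hwv n d lam) = 0) ∧
    (∀ k : ℕ,
      Module.finrank ℂ (hwv n d fun i => if (i : ℕ) = 0 then k * d else 0) = 1) := by
  constructor
  · intro lam hanti h1
    exact Aux15.part1 hn hd lam hanti h1
  · intro k
    exact Aux15.part2 hn hd k
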